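/- For any unweighted graph G, the number of (not necessarily induced) 3-vertex paths of G satisfies #P_3(G) ≥ 3·#K_3(G), with equality if and only if every connected component of G is a clique. In particular, for G connected, equality holds iff G is a clique. -/

import Mathlib

noncomputable section

/-- The number of (not necessarily induced) 3-vertex paths of `G`: pairs consisting of
a 3-element vertex set together with a choice of middle vertex adjacent to the other
two. -/
def p3Count {V : Type*} [Fintype V] (G : SimpleGraph V) : ℕ :=
  Nat.card {x : Finset V × V // x.1.card = 3 ∧ x.2 ∈ x.1 ∧
    ∀ y ∈ x.1, y ≠ x.2 → G.Adj x.2 y}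

/-- The number of triangles (3-cliques) of `G`. -/
def k3Count {V : Type*} [Fintype V] (G : SimpleGraph V) : ℕ :=
  Nat.card {s : Finset V // G.IsNClique 3 s}

open Finset

/-- `#P₃(G) ≥ 3·#K₃(G)`, with equality iff every connected component of `G` is a
clique; in particular, for connected `G`, equality holds iff `G` is a clique. -/
theorem p3_ge_three_k3 {V : Type*} [Fintype V] (G : SimpleGraph V) :
    3 * k3Count G ≤ p3Count G ∧
    (p3Count G = 3 * k3Count G ↔ ∀ u v : V, u ≠ v → G.Reachable u v → G.Adj u v) ∧
    (G.Connected → (p3Count G = 3 * k3Count G ↔ ∀ u v : V, u ≠ v → G.Adj u v)) := by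
  classical
  set A : Finset (Finset V × V) := univ.filter (fun x => x.1.card = 3 ∧ x.2 ∈ x.1 ∧
    ∀ y ∈ x.1, y ≠ x.2 → G.Adj x.2 y) with hA
  set B : Finset (Finset V × V) := univ.filter
    (fun x => G.IsNClique 3 x.1 ∧ x.2 ∈ x.1) with hB
  have hp3 : p3Count G = A.card := by
    rw [p3Count, Nat.card_eq_fintype_card, hA]
    convert Fintype.card_subtype _
  have hk3 : k3Count G = (univ.filter (fun s : Finset V => G.IsNClique 3 s)).card := by
    rw [k3Count, Nat.card_eq_fintype_card]
    convert Fintype.card_subtype _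
  have hBA : B ⊆ A := by
    intro x hx
    simp only [hA, hB, mem_filter, mem_univ, true_and] at hx ⊢
    obtain ⟨hc, hm⟩ := hx
    exact ⟨hc.card_eq, hm, fun y hy hne => hc.1 (by simpa using hm) (by simpa using hy) hne.symm⟩
  have hBcard : B.card = 3 * k3Count G := by
    have hfib : ∀ s ∈ univ.filter (fun s : Finset V => G.IsNClique 3 s),
        (B.filter (fun x => x.1 = s)).card = 3 := by
      intro s hs
      have hsC : G.IsNClique 3 s := (mem_filter.mp hs).2
      have himg : B.filter (fun x => x.1 = s) = s.image (fun b => (s, b)) := by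
        ext x
        simp only [hB, filter_filter, mem_filter, mem_univ, true_and, mem_image]
        constructor
        · rintro ⟨⟨hc, hm⟩, h1⟩
          exact ⟨x.2, h1 ▸ hm, by rw [← h1]⟩
        · rintro ⟨b, hb, rfl⟩
          exact ⟨⟨hsC, hb⟩, rfl⟩
      rw [himg, Finset.card_image_of_injective _
        (fun a b h => ((Prod.mk.injEq _ _ _ _).mp h).2), hsC.card_eq]
    calc B.card = ∑ s ∈ univ.filter (fun s : Finset V => G.IsNClique 3 s),
          (B.filter (fun x => x.1 = s)).card :=
        Finset.card_eq_sum_card_fiberwise (fun x hx => by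
          simp only [hB, mem_filter, mem_univ, true_and] at hx ⊢
          exact Finset.mem_coe.mpr (mem_filter.mpr ⟨mem_univ _, (mem_filter.mp (show x ∈ univ.filter (fun x : Finset V × V => G.IsNClique 3 x.1 ∧ x.2 ∈ x.1) from hx)).2.1⟩))
      _ = ∑ _s ∈ univ.filter (fun s : Finset V => G.IsNClique 3 s), 3 :=
        Finset.sum_congr rfl hfib
      _ = 3 * k3Count G := by rw [Finset.sum_const, smul_eq_mul, hk3, mul_comm]
  have key1 : A = B → ∀ u v : V, u ≠ v → G.Reachable u v → G.Adj u v := by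
    intro hAB
    have tri : ∀ a b c : V, G.Adj b a → G.Adj b c → a ≠ c → G.Adj a c := by
      intro a b c hba hbc hac
      have hx : (({a, b, c} : Finset V), b) ∈ A := by
        simp only [hA, mem_filter, mem_univ, true_and]
        refine ⟨?_, by simp, ?_⟩
        · rw [Finset.card_insert_of_notMem (by simp [hba.ne', hac]),
            Finset.card_insert_of_notMem (by simp [hbc.ne]), Finset.card_singleton]
        · intro y hy hne
          simp only [mem_insert, mem_singleton] at hy
          rcases hy with rfl | rfl | rfl
          · exact hba
          · exact absurd rfl hne
          · exact hbc
      rw [hAB] at hx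
      simp only [hB, mem_filter, mem_univ, true_and] at hx
      exact hx.1.1 (by simp) (by simp) hac
    have main : ∀ {u v : V}, G.Walk u v → u ≠ v → G.Adj u v := by
      intro u v w
      induction w with
      | nil => intro h; exact absurd rfl h
      | @cons a b c hab p ih =>
        intro hac
        by_cases hbc : b = c
        · exact hbc ▸ hab
        · exact tri a b c hab.symm (ih hbc) hac
    intro u v hne hr
    obtain ⟨w⟩ := hr
    exact main w hne
  have key2 : (∀ u v : V, u ≠ v → G.Reachable u v → G.Adj u v) → A ⊆ B := by
    intro hC x hx
    simp only [hA, mem_filter, mem_univ, true_and] at hx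
    obtain ⟨hcard, hm, hadj⟩ := hx
    simp only [hB, mem_filter, mem_univ, true_and]
    refine ⟨⟨?_, hcard⟩, hm⟩
    intro y hy z hz hyz
    simp only [Finset.mem_coe] at hy hz
    by_cases hy2 : y = x.2
    · subst hy2
      exact hadj z hz (fun h => hyz h.symm)
    · by_cases hz2 : z = x.2
      · subst hz2
        exact (hadj y hy hy2).symm
      · exact hC y z hyz
          (((hadj y hy hy2).reachable.symm).trans (hadj z hz hz2).reachable)
  refine ⟨?_, ?_, ?_⟩
  · rw [hp3, ← hBcard]
    exact Finset.card_le_card hBA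
  · constructor
    · intro h
      have hcard : A.card ≤ B.card := by rw [hBcard, ← hp3, h]
      exact key1 (Finset.eq_of_subset_of_card_le hBA hcard).symm
    · intro h
      have : A = B := Finset.Subset.antisymm (key2 h) hBA
      rw [hp3, this, hBcard]
  · intro hconn
    constructor
    · intro h u v hne
      have hcard : A.card ≤ B.card := by rw [hBcard, ← hp3, h]
      exact key1 (Finset.eq_of_subset_of_card_le hBA hcard).symm u v hne
        (hconn.preconnected u v)
    · intro h
      have : A = B := Finset.Subset.antisymm (key2 (fun u v hne _ => h u v hne)) hBA
      rw [hp3, this, hBcard]
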